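/- arXiv:2507.01263 — 3 statements merged into one kernel-verified Lean document; each statement's English description precedes it below -/
import Mathlib

section
/- If Γ is a torsion-free subgroup of finite index n in a group Π, then for every finite subgroup F of Π, the order of F divides n. -/
/-- If `Γ` is a torsion-free subgroup of finite index `n` in `Pgrp`, then the order of
every finite subgroup `F` of `Pgrp` divides `n`. -/
theorem stmt_1 {Pgrp : Type*} [Group Pgrp] (Γ : Subgroup Pgrp) (n : ℕ) (hn : Γ.index = n)
    (hnpos : 0 < n)
    (htf : ∀ x ∈ Γ, IsOfFinOrder x → x = 1)
    (F : Subgroup Pgrp) (hF : Finite F) :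
    Nat.card F ∣ n := by
  have hfin : Finite (Pgrp ⧸ Γ) := by
    have h0 : Γ.index ≠ 0 := by omega
    haveI : Γ.FiniteIndex := ⟨h0⟩
    infer_instance
  have hfree : ∀ x : Pgrp ⧸ Γ, MulAction.stabilizer F x = ⊥ := by
    intro x
    refine Quotient.inductionOn' x ?_
    intro g
    ext f
    simp only [Subgroup.mem_bot, MulAction.mem_stabilizer_iff]
    constructor
    · intro hfx
      have h1 : (QuotientGroup.mk ((f : Pgrp) * g) : Pgrp ⧸ Γ) = QuotientGroup.mk g := hfx
      have h2 : ((f : Pgrp) * g)⁻¹ * g ∈ Γ := (QuotientGroup.eq).mp h1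
      have h2' : g⁻¹ * (f : Pgrp)⁻¹ * g ∈ Γ := by
        have he : ((f : Pgrp) * g)⁻¹ * g = g⁻¹ * (f : Pgrp)⁻¹ * g := by group
        rwa [he] at h2
      set k := Nat.card F with hk
      have hkpos : 0 < k := Nat.card_pos
      have hfk : f ^ k = 1 := pow_card_eq_one'
      have hfinv : ((f : Pgrp)⁻¹) ^ k = 1 := by
        have hc : ((f : Pgrp)) ^ k = 1 := by
          have := congrArg (Subgroup.subtype F) hfk
          simpa using this
        rw [inv_pow, hc, inv_one]
      have hpow : (g⁻¹ * (f : Pgrp)⁻¹ * g) ^ k = 1 := by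
        have h := conj_pow (i := k) (a := g⁻¹) (b := ((f : Pgrp)⁻¹))
        rw [inv_inv] at h
        rw [h, hfinv, mul_one, inv_mul_cancel]
      have hfo : IsOfFinOrder (g⁻¹ * (f : Pgrp)⁻¹ * g) :=
        isOfFinOrder_iff_pow_eq_one.mpr ⟨k, hkpos, hpow⟩
      have h3 : g⁻¹ * (f : Pgrp)⁻¹ * g = 1 := htf _ h2' hfo
      have hf1 : (f : Pgrp)⁻¹ = 1 := by
        calc (f : Pgrp)⁻¹ = g * (g⁻¹ * (f : Pgrp)⁻¹ * g) * g⁻¹ := by group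
        _ = 1 := by rw [h3]; group
      have : (f : Pgrp) = 1 := by rw [← inv_inv (f : Pgrp), hf1, inv_one]
      exact Subtype.ext this
    · rintro rfl; simp
  classical
  have e := MulAction.selfEquivSigmaOrbitsQuotientStabilizer F (Pgrp ⧸ Γ)
  have e2 : ∀ ω : MulAction.orbitRel.Quotient F (Pgrp ⧸ Γ),
      (F ⧸ MulAction.stabilizer F ω.out) ≃ F := fun ω =>
    (Subgroup.quotientEquivOfEq (hfree ω.out)).trans QuotientGroup.quotientBot.toEquiv
  have e3 : (Pgrp ⧸ Γ) ≃ (MulAction.orbitRel.Quotient F (Pgrp ⧸ Γ)) × F :=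
    e.trans ((Equiv.sigmaCongrRight e2).trans (Equiv.sigmaEquivProd _ _))
  have hcard : Nat.card (Pgrp ⧸ Γ) =
      Nat.card (MulAction.orbitRel.Quotient F (Pgrp ⧸ Γ)) * Nat.card F := by
    rw [Nat.card_congr e3, Nat.card_prod]
  rw [← hn, Subgroup.index, hcard]
  exact dvd_mul_left _ _
end

section
/- With x, y, z, w ∈ S₂₄ as in the permutation representation σ₂,₁ of the orientable prism group Π̃³³³₂, each of the permutations x, y, z, y⁻¹w, z⁻¹x is a product of eight disjoint 3-cycles; each of w, y⁻¹x, z⁻¹w is a product of twelve disjoint 2-cycles; and z⁻¹y is a product of six disjoint 4-cycles. -/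
set_option maxRecDepth 100000
instance : ∀ (f g : Equiv.Perm (Fin 24)), Decidable (f.Disjoint g) :=
  fun f g => decidable_of_iff (∀ x, f x = x ∨ g x = x) Iff.rfl

def Lx : List (List (Fin 24)) := [[0, 1, 2], [3, 12, 7], [4, 10, 16], [5, 19, 15], [6, 18, 11], [8, 20, 9], [13, 17, 14], [21, 22, 23]]
def Ly : List (List (Fin 24)) := [[0, 3, 4], [1, 6, 7], [2, 10, 11], [5, 20, 21], [8, 19, 17], [9, 14, 23], [12, 18, 16], [13, 15, 22]]
def Lz : List (List (Fin 24)) := [[0, 2, 5], [1, 8, 9], [3, 13, 14], [4, 17, 10], [6, 22, 21], [7, 12, 23], [11, 18, 20], [15, 19, 16]]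
def Lyiw : List (List (Fin 24)) := [[0, 7, 15], [1, 4, 12], [2, 23, 20], [3, 13, 18], [5, 17, 10], [6, 16, 22], [8, 21, 14], [9, 11, 19]]
def Lzix : List (List (Fin 24)) := [[0, 9, 1], [2, 5, 15], [3, 7, 14], [4, 17, 13], [6, 11, 21], [8, 18, 20], [10, 19, 16], [12, 23, 22]]
def Lw : List (List (Fin 24)) := [[0, 1], [2, 9], [3, 15], [4, 18], [5, 8], [6, 12], [7, 22], [10, 20], [11, 17], [13, 16], [14, 19], [21, 23]]
def Lyix : List (List (Fin 24)) := [[0, 7], [1, 11], [2, 4], [3, 16], [5, 8], [6, 12], [9, 17], [10, 18], [13, 19], [14, 22], [15, 21], [20, 23]]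
def Lziw : List (List (Fin 24)) := [[0, 9], [1, 5], [2, 8], [3, 16], [4, 11], [6, 7], [10, 18], [12, 21], [13, 19], [14, 15], [17, 20], [22, 23]]
def Lziy : List (List (Fin 24)) := [[0, 14, 12, 11], [1, 21, 2, 17], [3, 10, 20, 22], [4, 5, 18, 19], [6, 23, 8, 15], [7, 9, 13, 16]]

lemma cycleType_of_list (s : Equiv.Perm (Fin 24)) (l : List (List (Fin 24)))
    (hp : (l.map List.formPerm).prod = s)
    (hn : ∀ c ∈ l, c.Nodup) (h2 : ∀ c ∈ l, 2 ≤ c.length) :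
    (l.map List.formPerm).Pairwise Equiv.Perm.Disjoint →
    s.cycleType = ↑(l.map List.length) := by
  intro hd
  rw [Equiv.Perm.cycleType_eq _ hp ?_ hd]
  · congr 1
    rw [List.map_map, List.map_congr_left]
    intro c hc
    have hne : ∀ a : Fin 24, c ≠ [a] := by
      intro a h; have := h2 c hc; simp [h] at this
    simp [Function.comp, List.support_formPerm_of_nodup c (hn c hc) hne,
      List.toFinset_card_of_nodup (hn c hc)]
  · intro t ht
    obtain ⟨c, hc, rfl⟩ := List.mem_map.mp ht
    exact List.isCycle_formPerm (hn c hc) (h2 c hc)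

/-- For the permutations `x, y, z, w ∈ S₂₄` of the permutation representation `σ₂,₁`:
`x, y, z, y⁻¹w, z⁻¹x` are each a product of eight disjoint 3-cycles; `w, y⁻¹x, z⁻¹w` are
each a product of twelve disjoint 2-cycles; and `z⁻¹y` is a product of six disjoint
4-cycles. -/
theorem stmt_14 (x y z w : Equiv.Perm (Fin 24))
    (hx : ∀ i, x i =
      ![1,2,0,12,10,19,18,3,20,8,16,6,7,17,13,5,4,14,11,15,9,22,23,21] i)
    (hy : ∀ i, y i =
      ![3,6,10,4,0,20,7,1,19,14,11,2,18,15,23,22,12,8,16,17,21,5,13,9] i)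
    (hz : ∀ i, z i =
      ![2,8,5,13,17,0,22,12,9,1,4,18,23,14,3,19,15,10,20,16,11,6,21,7] i)
    (hw : ∀ i, w i =
      ![1,0,9,15,18,8,12,22,5,2,20,17,6,16,19,3,13,11,4,14,10,23,7,21] i) :
    x.cycleType = Multiset.replicate 8 3 ∧
    y.cycleType = Multiset.replicate 8 3 ∧
    z.cycleType = Multiset.replicate 8 3 ∧
    (y⁻¹ * w).cycleType = Multiset.replicate 8 3 ∧
    (z⁻¹ * x).cycleType = Multiset.replicate 8 3 ∧
    w.cycleType = Multiset.replicate 12 2 ∧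
    (y⁻¹ * x).cycleType = Multiset.replicate 12 2 ∧
    (z⁻¹ * w).cycleType = Multiset.replicate 12 2 ∧
    (z⁻¹ * y).cycleType = Multiset.replicate 6 4 := by
  have hx' : x = (Lx.map List.formPerm).prod :=
    Equiv.ext fun i => (hx i).trans ((by decide : ∀ i : Fin 24,
      ![1,2,0,12,10,19,18,3,20,8,16,6,7,17,13,5,4,14,11,15,9,22,23,21] i
        = (Lx.map List.formPerm).prod i) i)
  have hy' : y = (Ly.map List.formPerm).prod :=
    Equiv.ext fun i => (hy i).trans ((by decide : ∀ i : Fin 24,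
      ![3,6,10,4,0,20,7,1,19,14,11,2,18,15,23,22,12,8,16,17,21,5,13,9] i
        = (Ly.map List.formPerm).prod i) i)
  have hz' : z = (Lz.map List.formPerm).prod :=
    Equiv.ext fun i => (hz i).trans ((by decide : ∀ i : Fin 24,
      ![2,8,5,13,17,0,22,12,9,1,4,18,23,14,3,19,15,10,20,16,11,6,21,7] i
        = (Lz.map List.formPerm).prod i) i)
  have hw' : w = (Lw.map List.formPerm).prod :=
    Equiv.ext fun i => (hw i).trans ((by decide : ∀ i : Fin 24,
      ![1,0,9,15,18,8,12,22,5,2,20,17,6,16,19,3,13,11,4,14,10,23,7,21] i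
        = (Lw.map List.formPerm).prod i) i)
  subst hx' hy' hz' hw'
  refine ⟨?_, ?_, ?_, ?_, ?_, ?_, ?_, ?_, ?_⟩
  · exact (cycleType_of_list _ Lx rfl (by decide) (by decide) (by decide)).trans (by decide)
  · exact (cycleType_of_list _ Ly rfl (by decide) (by decide) (by decide)).trans (by decide)
  · exact (cycleType_of_list _ Lz rfl (by decide) (by decide) (by decide)).trans (by decide)
  · exact (cycleType_of_list _ Lyiw (by decide) (by decide) (by decide) (by decide)).trans (by decide)
  · exact (cycleType_of_list _ Lzix (by decide) (by decide) (by decide) (by decide)).trans (by decide)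
  · exact (cycleType_of_list _ Lw rfl (by decide) (by decide) (by decide)).trans (by decide)
  · exact (cycleType_of_list _ Lyix (by decide) (by decide) (by decide) (by decide)).trans (by decide)
  · exact (cycleType_of_list _ Lziw (by decide) (by decide) (by decide) (by decide)).trans (by decide)
  · exact (cycleType_of_list _ Lziy (by decide) (by decide) (by decide) (by decide)).trans (by decide)
end

section
/- In the group ⟨C₁, C₃, C₅, C₇ | C₇ = C₁⁻¹C₅C₃⁻¹C₁⁻¹, C₅ = C₁C₃C₁⁻¹C₃, C₃⁻¹C₁C₃⁻¹ = C₁⁻², C₃ = C₁⁸⟩, the element C₁ satisfies C₁¹³ = 1, and the group is cyclic of order dividing 13. -/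
open FreeGroup in
/-- In `⟨C₁, C₃, C₅, C₇ | C₇ = C₁⁻¹C₅C₃⁻¹C₁⁻¹, C₅ = C₁C₃C₁⁻¹C₃, C₃⁻¹C₁C₃⁻¹ = C₁⁻²,
C₃ = C₁⁸⟩`, the element `C₁` satisfies `C₁¹³ = 1` and the group is cyclic of order
dividing 13.  (Generators: 0↦C₁, 1↦C₃, 2↦C₅, 3↦C₇.) -/
theorem stmt_19 (rels : Set (FreeGroup (Fin 4)))
    (hrels : rels = {
      of 3 * ((of 0)⁻¹ * of 2 * (of 1)⁻¹ * (of 0)⁻¹)⁻¹,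
      of 2 * (of 0 * of 1 * (of 0)⁻¹ * of 1)⁻¹,
      (of 1)⁻¹ * of 0 * (of 1)⁻¹ * (of 0)^2,
      of 1 * ((of 0)^8)⁻¹ }) :
    (PresentedGroup.of (rels := rels) 0) ^ 13 = 1 ∧
      IsCyclic (PresentedGroup rels) ∧ Nat.card (PresentedGroup rels) ∣ 13 := by
  have hone : ∀ r ∈ rels, PresentedGroup.mk rels r = 1 := fun r hr =>
    (QuotientGroup.eq_one_iff r).2 (Subgroup.subset_normalClosure hr)
  set a : PresentedGroup rels := PresentedGroup.of 0 with ha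
  set b : PresentedGroup rels := PresentedGroup.of 1 with hb
  set c : PresentedGroup rels := PresentedGroup.of 2 with hc
  set d : PresentedGroup rels := PresentedGroup.of 3 with hd
  have h1 : d * (a⁻¹ * c * b⁻¹ * a⁻¹)⁻¹ = 1 := by
    have := hone _ (by rw [hrels]; exact Set.mem_insert _ _)
    simpa [ha, hb, hc, hd, PresentedGroup.of] using this
  have h2 : c * (a * b * a⁻¹ * b)⁻¹ = 1 := by
    have := hone _ (by rw [hrels]; right; exact Set.mem_insert _ _)
    simpa [ha, hb, hc, hd, PresentedGroup.of] using this
  have h3 : b⁻¹ * a * b⁻¹ * a ^ 2 = 1 := by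
    have := hone _ (by rw [hrels]; right; right; exact Set.mem_insert _ _)
    simpa [ha, hb, PresentedGroup.of] using this
  have h4 : b * (a ^ 8)⁻¹ = 1 := by
    have := hone _ (by rw [hrels]; right; right; right; rfl)
    simpa [ha, hb, PresentedGroup.of] using this
  have hb8 : b = a ^ 8 := by
    have := mul_eq_one_iff_eq_inv.mp h4; simpa using this
  have ha13 : a ^ 13 = 1 := by
    rw [hb8] at h3
    have : (a ^ 8)⁻¹ * a * (a ^ 8)⁻¹ * a ^ 2 = (a ^ 13)⁻¹ := by group
    rw [this] at h3
    simpa using congrArg (·⁻¹) h3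
  have hcval : c = a ^ 16 := by
    have := mul_eq_one_iff_eq_inv.mp h2
    rw [hb8] at this
    rw [this]; group
  have hdval : d = a ^ 6 := by
    have := mul_eq_one_iff_eq_inv.mp h1
    rw [hcval, hb8] at this
    simp only [inv_inv] at this
    rw [this]; group
  have htop : Subgroup.zpowers a = ⊤ := by
    rw [eq_top_iff]
    intro x _
    refine PresentedGroup.generated_by rels _ (fun j => ?_) x
    fin_cases j
    · exact Subgroup.mem_zpowers a
    · show b ∈ Subgroup.zpowers a
      rw [hb8]; exact Subgroup.zpow_mem _ (Subgroup.mem_zpowers a) 8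
    · show c ∈ Subgroup.zpowers a
      rw [hcval]; exact Subgroup.zpow_mem _ (Subgroup.mem_zpowers a) 16
    · show d ∈ Subgroup.zpowers a
      rw [hdval]; exact Subgroup.zpow_mem _ (Subgroup.mem_zpowers a) 6
  refine ⟨ha13, ⟨a, fun x => ?_⟩, ?_⟩
  · have hx : x ∈ Subgroup.zpowers a := by rw [htop]; trivial
    exact hx
  · have hcard : Nat.card (PresentedGroup rels) = orderOf a := by
      rw [← Nat.card_zpowers, htop, Subgroup.card_top]
    rw [hcard]
    exact orderOf_dvd_of_pow_eq_one ha13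
end
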